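/- Let k ≥ 2, σ_i = i(k−i)/2, and let ξ : I → ℝ^k be a C¹ solution of system (P) on an interval I such that ∑_{i=1}^k ξ_i(τ) = 0 for all τ ∈ I and ξ(τ) ≠ 0 for every τ ∈ I. Fix τ₀ ∈ I with [τ₀, τ₀+δ) ⊂ I for some δ > 0, define b_i and B as below, and let J(τ₀) = { i ∈ {1,…,k+1} : b_i(τ₀) = B(τ₀) }. Then there exists ε > 0 with [τ₀, τ₀+ε) ⊂ I such that for every index i ∈ J(τ₀) with 2 ≤ i ≤ k and every t ∈ (τ₀, τ₀+ε), one has b_i(t) < B(τ₀). -/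

import Mathlib

/-- `σᵢ = i(k-i)/2` (so that `σ₀ = σ_k = 0`). -/
noncomputable def sig (k i : ℕ) : ℝ := (i : ℝ) * ((k : ℝ) - (i : ℝ)) / 2

/-- System (P): for `i = 1,…,k`,
`ξᵢ' = σᵢ₋₁(e^{-(ξᵢ-ξᵢ₋₁)} - 1) - σᵢ(e^{-(ξᵢ₊₁-ξᵢ)} - 1)` on the set `S`
(the conventions for `i = 1` and `i = k` are automatic since `σ₀ = σ_k = 0`). -/
def SolvesP (k : ℕ) (ξ : ℕ → ℝ → ℝ) (S : Set ℝ) : Prop :=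
  ∀ i, 1 ≤ i → i ≤ k → ∀ τ ∈ S, HasDerivAt (ξ i)
    (sig k (i - 1) * (Real.exp (-(ξ i τ - ξ (i - 1) τ)) - 1)
      - sig k i * (Real.exp (-(ξ (i + 1) τ - ξ i τ)) - 1)) τ

open Filter Set Real Topology

/-- Auxiliary: `b i` decays below `m` at a polynomial rate just after `τ₀`. -/
def decays (b : ℕ → ℝ → ℝ) (τ₀ m δ : ℝ) (i : ℕ) : Prop :=
  ∃ ε, 0 < ε ∧ ε ≤ δ / 2 ∧ ∃ c, 0 < c ∧ ∃ N : ℕ,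
    ∀ t ∈ Set.Icc τ₀ (τ₀ + ε), b i t ≤ m - c * (t - τ₀) ^ (N + 1)

lemma decay_base (b : ℕ → ℝ → ℝ) (j : ℕ) (τ₀ δ m : ℝ) (hδ : 0 < δ)
    (hcont : ContinuousAt (b j) τ₀) (hlt : b j τ₀ < m) : decays b τ₀ m δ j := by
  have h1 : ∀ᶠ t in nhds τ₀, b j t < (b j τ₀ + m) / 2 :=
    hcont.eventually_lt_const (by linarith)
  obtain ⟨r, hr0, hr⟩ := Metric.eventually_nhds_iff.mp h1
  set ε := min (r / 2) (δ / 2) with hε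
  have hε0 : 0 < ε := lt_min (by linarith) (by linarith)
  have hεδ : ε ≤ δ / 2 := min_le_right _ _
  set η := (m - b j τ₀) / 2 with hη
  have hη0 : 0 < η := by simp [hη]; linarith
  refine ⟨ε, hε0, hεδ, η / ε, by positivity, 0, ?_⟩
  intro t ht
  obtain ⟨ht1, ht2⟩ := ht
  have hd : dist t τ₀ < r := by
    rw [Real.dist_eq, abs_of_nonneg (by linarith)]
    have : ε ≤ r / 2 := min_le_left _ _
    linarith
  have hb' : b j t < (b j τ₀ + m) / 2 := hr hd
  have h2 : η / ε * (t - τ₀) ^ (0 + 1) ≤ η := by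
    have h3 : t - τ₀ ≤ ε := by linarith
    rw [pow_one]
    rw [div_mul_eq_mul_div, div_le_iff₀ hε0]
    nlinarith [sub_nonneg.mpr ht1]
  have : (b j τ₀ + m) / 2 = m - η := by rw [hη]; ring
  linarith

lemma decay_step (b : ℕ → ℝ → ℝ) (i n o : ℕ) (τ₀ δ m sg : ℝ)
    (I : Set ℝ) (hIccI : Set.Icc τ₀ (τ₀ + δ / 2) ⊆ I)
    (hderiv : ∀ τ ∈ I, HasDerivAt (b i)
      (-((b i τ + sg) * (2 * b i τ - b n τ - b o τ))) τ)
    (hpos : ∀ τ, 0 < b i τ + sg)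
    (hbi : ∀ t ∈ Set.Icc τ₀ (τ₀ + δ / 2), b i t ≤ m)
    (hbo : ∀ t ∈ Set.Icc τ₀ (τ₀ + δ / 2), b o t ≤ m)
    (hn : decays b τ₀ m δ n) : decays b τ₀ m δ i := by
  obtain ⟨ε, hε0, hεδ, c, hc0, N, hdec⟩ := hn
  set E := Set.Icc τ₀ (τ₀ + ε) with hE
  have hEsub : E ⊆ Set.Icc τ₀ (τ₀ + δ / 2) := Set.Icc_subset_Icc le_rfl (by linarith)
  have hEI : ∀ t ∈ E, t ∈ I := fun t ht => hIccI (hEsub ht)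
  have hτ₀E : τ₀ ∈ E := by simp [hE]; linarith
  have hacont : ContinuousOn (fun t => b i t + sg) E := fun t ht =>
    ((hderiv t (hEI t ht)).continuousAt.add continuousAt_const).continuousWithinAt
  have hEne : E.Nonempty := ⟨τ₀, hτ₀E⟩
  obtain ⟨tα, htα, hmin⟩ := isCompact_Icc.exists_isMinOn hEne hacont
  obtain ⟨tβ, htβ, hmax⟩ := isCompact_Icc.exists_isMaxOn hEne hacont
  set α := b i tα + sg with hαdef
  have hα0 : 0 < α := hpos tα
  set L := 2 * (b i tβ + sg) with hLdef
  have hL0 : 0 < L := by have := hpos tβ; simp only [hLdef]; linarith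
  have hαle : ∀ t ∈ E, α ≤ b i t + sg := fun t ht => hmin ht
  have hLge : ∀ t ∈ E, 2 * (b i t + sg) ≤ L := by
    intro t ht
    have h := hmax ht
    simp only [Set.mem_setOf_eq] at h
    simp only [hLdef]
    linarith [h]
  set W : ℝ → ℝ := fun u =>
    Real.exp (L * (u - τ₀)) * (b i u - m) + α * c / (N + 2) * (u - τ₀) ^ (N + 2) with hW
  have hwd : ∀ t ∈ E, HasDerivAt W
      (Real.exp (L * (t - τ₀)) * (L * (b i t - m)
        - (b i t + sg) * (2 * b i t - b n t - b o t)) + α * c * (t - τ₀) ^ (N + 1)) t := by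
    intro t ht
    have h1 : HasDerivAt (fun u => Real.exp (L * (u - τ₀))) (Real.exp (L * (t - τ₀)) * L) t := by
      have := (((hasDerivAt_id t).sub_const τ₀).const_mul L).exp
      simpa using this
    have h2 := h1.mul ((hderiv t (hEI t ht)).sub_const m)
    have h3 : HasDerivAt (fun u => α * c / (N + 2) * (u - τ₀) ^ (N + 2))
        (α * c * (t - τ₀) ^ (N + 1)) t := by
      have h := (((hasDerivAt_id t).sub_const τ₀).pow (N + 2)).const_mul (α * c / (N + 2))
      refine h.congr_deriv ?_
      have hN : ((N : ℝ) + 2) ≠ 0 := by positivity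
      simp only [Nat.add_sub_cancel, mul_one, id]
      push_cast
      field_simp
    have h4 := h2.add h3
    refine h4.congr_deriv ?_
    ring
  have hw'le : ∀ t ∈ E, Real.exp (L * (t - τ₀)) * (L * (b i t - m)
      - (b i t + sg) * (2 * b i t - b n t - b o t)) + α * c * (t - τ₀) ^ (N + 1) ≤ 0 := by
    intro t ht
    obtain ⟨ht1, ht2⟩ := ht
    have hvi : b i t ≤ m := hbi t (hEsub ⟨ht1, ht2⟩)
    have hvo : b o t ≤ m := hbo t (hEsub ⟨ht1, ht2⟩)
    have hvn : b n t ≤ m - c * (t - τ₀) ^ (N + 1) := hdec t ⟨ht1, ht2⟩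
    have hq0 : 0 ≤ c * (t - τ₀) ^ (N + 1) :=
      mul_nonneg hc0.le (pow_nonneg (by linarith) _)
    have hA := hpos t
    have hAα := hαle t ⟨ht1, ht2⟩
    have hAL := hLge t ⟨ht1, ht2⟩
    have e1 : (L - 2 * (b i t + sg)) * (b i t - m) ≤ 0 :=
      mul_nonpos_of_nonneg_of_nonpos (by linarith) (by linarith)
    have e2 : 0 ≤ (b i t + sg) * (m - b o t) := mul_nonneg hA.le (by linarith)
    have e3 : (b i t + sg) * (b n t - m) ≤ α * (b n t - m) :=
      mul_le_mul_of_nonpos_right hAα (by linarith)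
    have e4 : α * (b n t - m) ≤ α * (-(c * (t - τ₀) ^ (N + 1))) :=
      mul_le_mul_of_nonneg_left (by linarith) hα0.le
    have hinner : L * (b i t - m) - (b i t + sg) * (2 * b i t - b n t - b o t)
        ≤ -(α * (c * (t - τ₀) ^ (N + 1))) := by nlinarith [e1, e2, e3, e4]
    have hαq : 0 ≤ α * (c * (t - τ₀) ^ (N + 1)) := mul_nonneg hα0.le hq0
    have hE1 : 1 ≤ Real.exp (L * (t - τ₀)) :=
      Real.one_le_exp (mul_nonneg hL0.le (by linarith))
    have h5 : Real.exp (L * (t - τ₀)) * (L * (b i t - m)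
        - (b i t + sg) * (2 * b i t - b n t - b o t))
        ≤ 1 * (L * (b i t - m) - (b i t + sg) * (2 * b i t - b n t - b o t)) :=
      mul_le_mul_of_nonpos_right hE1 (by linarith)
    have h6 : α * (c * (t - τ₀) ^ (N + 1)) = α * c * (t - τ₀) ^ (N + 1) := by ring
    linarith
  have hCont : ContinuousOn W E := fun t ht => (hwd t ht).continuousAt.continuousWithinAt
  have hAnti : AntitoneOn W E := by
    apply antitoneOn_of_deriv_nonpos (convex_Icc _ _) hCont
    · intro t ht
      rw [interior_Icc] at ht
      exact ((hwd t (Set.Ioo_subset_Icc_self ht)).differentiableAt.differentiableWithinAt)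
    · intro t ht
      rw [interior_Icc] at ht
      rw [(hwd t (Set.Ioo_subset_Icc_self ht)).deriv]
      exact hw'le t (Set.Ioo_subset_Icc_self ht)
  have hWτ₀ : W τ₀ ≤ 0 := by
    have hbiτ₀ : b i τ₀ ≤ m := hbi τ₀ (hEsub hτ₀E)
    simp only [hW, sub_self, mul_zero, Real.exp_zero, one_mul]
    rw [zero_pow (by omega)]
    simp
    linarith
  refine ⟨ε, hε0, hεδ, α * c / (N + 2) * Real.exp (-(L * ε)), by positivity, N + 1, ?_⟩
  intro t ht
  have hWt : W t ≤ W τ₀ := hAnti hτ₀E ht ht.1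
  have h1 : Real.exp (L * (t - τ₀)) * (b i t - m)
      + α * c / (N + 2) * (t - τ₀) ^ (N + 2) ≤ 0 := by
    have := le_trans hWt hWτ₀
    simpa [hW] using this
  have h2 : Real.exp (L * (t - τ₀)) * (b i t - m)
      ≤ -(α * c / (N + 2) * (t - τ₀) ^ (N + 2)) := by linarith
  have h3 : b i t - m ≤ Real.exp (-(L * (t - τ₀))) * -(α * c / (N + 2) * (t - τ₀) ^ (N + 2)) := by
    have h4 := mul_le_mul_of_nonneg_left h2 (Real.exp_nonneg (-(L * (t - τ₀))))
    calc b i t - m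
        = Real.exp (-(L * (t - τ₀))) * (Real.exp (L * (t - τ₀)) * (b i t - m)) := by
          rw [← mul_assoc, ← Real.exp_add]; simp
      _ ≤ _ := h4
  have ht1 := ht.1
  have ht2 := ht.2
  have h5 : Real.exp (-(L * (t - τ₀))) * -(α * c / (N + 2) * (t - τ₀) ^ (N + 2))
      ≤ Real.exp (-(L * ε)) * -(α * c / (N + 2) * (t - τ₀) ^ (N + 2)) := by
    apply mul_le_mul_of_nonpos_right
    · exact Real.exp_le_exp.mpr (by nlinarith)
    · have hp : 0 ≤ (t - τ₀) ^ (N + 2) := pow_nonneg (by linarith) _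
      have hco : 0 ≤ α * c / (N + 2) := by positivity
      nlinarith
  have hre : Real.exp (-(L * ε)) * -(α * c / (N + 2) * (t - τ₀) ^ (N + 2))
      = -(α * c / (N + 2) * Real.exp (-(L * ε)) * (t - τ₀) ^ (N + 1 + 1)) := by ring
  linarith [h3, h5, hre.le, hre.ge]

lemma max_bound {ι : Type*} (s : Finset ι) (hs : s.Nonempty) (f : ι → ℝ → ℝ) (a T : ℝ)
    (F : ℝ → ℝ) (hF : ∀ t, F t = s.sup' hs (fun i => f i t))
    (hcont : ∀ i ∈ s, ∀ t ∈ Set.Icc a T, ContinuousAt (f i) t)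
    (hder : ∀ i ∈ s, ∀ x ∈ Set.Ico a T, f i x = F x → ∃ d, d ≤ 0 ∧ HasDerivAt (f i) d x) :
    ∀ t ∈ Set.Icc a T, F t ≤ F a := by
  have hFeq : F = fun x => s.sup' hs (fun i => f i x) := funext hF
  have hFc : ContinuousOn F (Set.Icc a T) := by
    intro t ht
    have h := ContinuousAt.finset_sup'_apply hs (fun i hi => hcont i hi t ht)
    rw [hFeq]
    exact h.continuousWithinAt
  have bound : ∀ x ∈ Set.Ico a T, ∀ r, (0:ℝ) < r →
      ∃ᶠ z in 𝓝[>] x, slope F x z < r := by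
    intro x hx r hr
    have hxI : x ∈ Set.Icc a T := ⟨hx.1, hx.2.le⟩
    have hkey : ∀ i ∈ s, ∀ᶠ z in 𝓝[>] x,
        (f i z - f i x) / (z - x) + (f i x - F x) / (z - x) < r := by
      intro i hi
      have hle : f i x ≤ F x := by
        rw [hF]
        exact Finset.le_sup' (fun i => f i x) hi
      rcases eq_or_lt_of_le hle with heq | hlt
      · obtain ⟨d, hd0, hdd⟩ := hder i hi x hx heq
        have h1 : Tendsto (fun z => (f i z - f i x) / (z - x)) (𝓝[>] x) (𝓝 d) := by
          have h2 := hasDerivAt_iff_tendsto_slope.mp hdd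
          have h3 : 𝓝[>] x ≤ 𝓝[≠] x :=
            nhdsWithin_mono x (fun z hz => ne_of_gt hz)
          exact ((h2.mono_left h3).congr fun z => by rw [slope_def_field])
        have h2 : (fun z : ℝ => (f i x - F x) / (z - x)) = fun _ => (0:ℝ) := by
          funext z; rw [heq, sub_self, zero_div]
        have h4 : Tendsto (fun z => (f i z - f i x) / (z - x) + (f i x - F x) / (z - x))
            (𝓝[>] x) (𝓝 (d + 0)) := by
          refine h1.add ?_
          rw [h2]; exact tendsto_const_nhds
        exact h4.eventually_lt_const (by linarith)
      · have heqf : (fun z => (f i z - f i x) / (z - x) + (f i x - F x) / (z - x))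
            = fun z => (f i z - F x) * (z - x)⁻¹ := by
          funext z; rw [← add_div, div_eq_mul_inv]; ring_nf
        have hnum : Tendsto (fun z => f i z - F x) (𝓝[>] x) (𝓝 (f i x - F x)) := by
          have h0 : Tendsto (f i) (𝓝[>] x) (𝓝 (f i x)) :=
            (hcont i hi x hxI).tendsto.mono_left nhdsWithin_le_nhds
          exact h0.sub_const (F x)
        have hsub : Tendsto (fun z => z - x) (𝓝[>] x) (𝓝[>] (0:ℝ)) := by
          apply tendsto_nhdsWithin_of_tendsto_nhds_of_eventually_within
          · have : Tendsto (fun z : ℝ => z - x) (𝓝 x) (𝓝 (x - x)) :=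
              (continuous_id.sub continuous_const).tendsto x
            rw [sub_self] at this
            exact this.mono_left nhdsWithin_le_nhds
          · filter_upwards [self_mem_nhdsWithin] with z hz
            simpa [Set.mem_Ioi, sub_pos] using hz
        have hinv : Tendsto (fun z : ℝ => (z - x)⁻¹) (𝓝[>] x) atTop :=
          tendsto_inv_nhdsGT_zero.comp hsub
        have hb := Tendsto.neg_mul_atTop (by linarith : f i x - F x < 0) hnum hinv
        have hb' := hb.congr (fun z => (congrFun heqf z).symm)
        exact hb'.eventually (eventually_lt_atBot r)
    have hall := (Filter.eventually_all_finset s).2 hkey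
    refine Filter.Eventually.frequently ?_
    filter_upwards [hall, self_mem_nhdsWithin] with z hz1 hz2
    obtain ⟨j, hj, hjz⟩ := Finset.exists_mem_eq_sup' hs (fun i => f i z)
    have hzx : (0:ℝ) < z - x := sub_pos.mpr hz2
    have hform : slope F x z = (f j z - f j x) / (z - x) + (f j x - F x) / (z - x) := by
      rw [slope_def_field, ← add_div, hF z, hjz]
      ring_nf
    rw [hform]
    exact hz1 j hj
  intro t ht
  exact image_le_of_liminf_slope_right_le_deriv_boundary (B := fun _ => F a)
    (B' := fun _ => 0) hFc le_rfl continuousOn_const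
    (fun x _ => hasDerivWithinAt_const x _ (F a)) bound ht


/-- if `ξ` solves (P) on the interval `I`, has zero center of mass and never
vanishes on `I`, and if `τ₀ ∈ I` with `[τ₀, τ₀+δ) ⊆ I` for some `δ > 0`, then there is
`ε > 0` with `[τ₀, τ₀+ε) ⊆ I` such that for every `i ∈ J(τ₀)` (i.e. `bᵢ(τ₀) = B(τ₀)`)
with `2 ≤ i ≤ k` and every `t ∈ (τ₀, τ₀+ε)`, one has `bᵢ(t) < B(τ₀)`. -/
theorem stmt6 (k : ℕ) (hk : 2 ≤ k) (I : Set ℝ) (hI : I.OrdConnected)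
    (ξ : ℕ → ℝ → ℝ) (hξ : SolvesP k ξ I)
    (hsum : ∀ τ ∈ I, ∑ i ∈ Finset.Icc 1 k, ξ i τ = 0)
    (hne : ∀ τ ∈ I, ∃ i, 1 ≤ i ∧ i ≤ k ∧ ξ i τ ≠ 0)
    (τ₀ : ℝ) (hτ₀ : τ₀ ∈ I) (δ : ℝ) (hδ : 0 < δ) (hδI : Set.Ico τ₀ (τ₀ + δ) ⊆ I)
    (b : ℕ → ℝ → ℝ)
    (hb : ∀ i τ, b i τ = if 2 ≤ i ∧ i ≤ k then
      sig k (i - 1) * (Real.exp (-(ξ i τ - ξ (i - 1) τ)) - 1) else 0)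
    (B : ℝ → ℝ)
    (hB : ∀ τ, B τ
      = (Finset.Icc 1 (k + 1)).sup' (Finset.nonempty_Icc.mpr (by omega)) (fun i => b i τ)) :
    ∃ ε > 0, Set.Ico τ₀ (τ₀ + ε) ⊆ I ∧
      ∀ i, 2 ≤ i → i ≤ k → b i τ₀ = B τ₀ →
        ∀ t ∈ Set.Ioo τ₀ (τ₀ + ε), b i t < B τ₀ := by
  set m := B τ₀ with hm
  have hIccI : Set.Icc τ₀ (τ₀ + δ / 2) ⊆ I := by
    intro t ht
    exact hδI ⟨ht.1, by have := ht.2; simp only [Set.mem_Icc] at *; linarith⟩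
  have hS : (Finset.Icc 1 (k + 1)).Nonempty := Finset.nonempty_Icc.mpr (by omega)
  have hsig0 : sig k 0 = 0 := by simp [sig]
  have hsigk : sig k k = 0 := by simp [sig]
  have hsigpos : ∀ j : ℕ, 1 ≤ j → j < k → 0 < sig k j := by
    intro j h1 h2
    have hj : (1 : ℝ) ≤ (j : ℝ) := by exact_mod_cast h1
    have hk' : (j : ℝ) < (k : ℝ) := by exact_mod_cast h2
    unfold sig
    apply div_pos
    · nlinarith
    · norm_num
  have hb1 : ∀ τ, b 1 τ = 0 := fun τ => by rw [hb, if_neg (by omega)]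
  have hbk1 : ∀ τ, b (k + 1) τ = 0 := fun τ => by rw [hb, if_neg (by omega)]
  have hbformula : ∀ i, 2 ≤ i → i ≤ k → ∀ τ,
      b i τ = sig k (i - 1) * (Real.exp (-(ξ i τ - ξ (i - 1) τ)) - 1) :=
    fun i h2 hik τ => by rw [hb, if_pos ⟨h2, hik⟩]
  have hxid : ∀ l, 1 ≤ l → l ≤ k → ∀ τ ∈ I, HasDerivAt (ξ l) (b l τ - b (l + 1) τ) τ := by
    intro l h1 hlk τ hτ
    have h := hξ l h1 hlk τ hτ
    have e1 : b l τ = sig k (l - 1) * (Real.exp (-(ξ l τ - ξ (l - 1) τ)) - 1) := by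
      rcases Nat.eq_or_lt_of_le h1 with h' | h'
      · rw [← h']
        simp [hb1, hsig0]
      · exact hbformula l (by omega) hlk τ
    have e2 : b (l + 1) τ = sig k l * (Real.exp (-(ξ (l + 1) τ - ξ l τ)) - 1) := by
      rcases Nat.lt_or_ge l k with h' | h'
      · rw [hb, if_pos (⟨by omega, by omega⟩ : 2 ≤ l + 1 ∧ l + 1 ≤ k)]
        norm_num
      · have hlk' : l = k := le_antisymm hlk h'
        rw [hlk', hbk1, hsigk]
        ring
    rw [e1, e2]
    exact h
  have hapos : ∀ i, 2 ≤ i → i ≤ k → ∀ τ, 0 < b i τ + sig k (i - 1) := by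
    intro i h2 hik τ
    have hs := hsigpos (i - 1) (by omega) (by omega)
    have hexp := Real.exp_pos (-(ξ i τ - ξ (i - 1) τ))
    rw [hbformula i h2 hik τ]
    nlinarith
  have hbderiv : ∀ i, 2 ≤ i → i ≤ k → ∀ τ ∈ I, HasDerivAt (b i)
      (-((b i τ + sig k (i - 1)) * (2 * b i τ - b (i - 1) τ - b (i + 1) τ))) τ := by
    intro i h2 hik τ hτ
    have hu : HasDerivAt (fun t => ξ i t - ξ (i - 1) t)
        ((b i τ - b (i + 1) τ) - (b (i - 1) τ - b i τ)) τ := by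
      have hX := hxid i (by omega) hik τ hτ
      have hY := hxid (i - 1) (by omega) (by omega) τ hτ
      have e : i - 1 + 1 = i := by omega
      rw [e] at hY
      exact hX.sub hY
    have hD := ((hu.neg.exp).sub_const 1).const_mul (sig k (i - 1))
    have hgoal : HasDerivAt (fun t => sig k (i - 1) * (Real.exp (-(ξ i t - ξ (i - 1) t)) - 1))
        (-((b i τ + sig k (i - 1)) * (2 * b i τ - b (i - 1) τ - b (i + 1) τ))) τ := by
      refine hD.congr_deriv ?_
      simp only [Pi.neg_apply]
      rw [hbformula i h2 hik τ]
      ring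
    have hfun : b i = fun t => sig k (i - 1) * (Real.exp (-(ξ i t - ξ (i - 1) t)) - 1) :=
      funext fun t => hbformula i h2 hik t
    exact hgoal.congr_of_eventuallyEq
      (Filter.Eventually.of_forall fun t => hbformula i h2 hik t)
  have hble : ∀ j, 1 ≤ j → j ≤ k + 1 → ∀ τ, b j τ ≤ B τ := by
    intro j h1 h2 τ
    rw [hB]
    exact Finset.le_sup' (fun i => b i τ) (Finset.mem_Icc.mpr ⟨h1, h2⟩)
  have hcontAt : ∀ j, 1 ≤ j → j ≤ k + 1 → ∀ τ ∈ I, ContinuousAt (b j) τ := by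
    intro j h1 h2 τ hτ
    by_cases hj : 2 ≤ j ∧ j ≤ k
    · exact (hbderiv j hj.1 hj.2 τ hτ).continuousAt
    · have hcj : b j = fun _ => (0 : ℝ) := funext fun t => by rw [hb, if_neg hj]
      rw [hcj]
      exact continuousAt_const
  have hub : ∀ t ∈ Set.Icc τ₀ (τ₀ + δ / 2), B t ≤ m := by
    refine max_bound (Finset.Icc 1 (k + 1)) hS b τ₀ (τ₀ + δ / 2) B (fun t => hB t) ?_ ?_
    · intro i hi t ht
      obtain ⟨h1, h2⟩ := Finset.mem_Icc.mp hi
      exact hcontAt i h1 h2 t (hIccI ht)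
    · intro i hi x hx hmax
      obtain ⟨h1, h2⟩ := Finset.mem_Icc.mp hi
      by_cases hj : 2 ≤ i ∧ i ≤ k
      · refine ⟨_, ?_, hbderiv i hj.1 hj.2 x (hIccI ⟨hx.1, hx.2.le⟩)⟩
        have hp := hapos i hj.1 hj.2 x
        have hn1 := hble (i - 1) (by omega) (by omega) x
        have hn2 := hble (i + 1) (by omega) (by omega) x
        rw [← hmax] at hn1 hn2
        nlinarith
      · refine ⟨0, le_rfl, ?_⟩
        have hcj : b i = fun _ => (0 : ℝ) := funext fun t => by rw [hb, if_neg hj]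
        rw [hcj]
        exact hasDerivAt_const x 0
  have hble2 : ∀ j, 1 ≤ j → j ≤ k + 1 → ∀ t ∈ Set.Icc τ₀ (τ₀ + δ / 2), b j t ≤ m :=
    fun j h1 h2 t ht => le_trans (hble j h1 h2 t) (hub t ht)
  have hm0 : 0 ≤ m := by
    have := hble 1 (by omega) (by omega) τ₀
    rw [hb1] at this
    exact this
  have hstepL : ∀ i, 2 ≤ i → i ≤ k → decays b τ₀ m δ (i - 1) → decays b τ₀ m δ i := by
    intro i h2 hik hd
    exact decay_step b i (i - 1) (i + 1) τ₀ δ m (sig k (i - 1)) I hIccI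
      (fun τ hτ => hbderiv i h2 hik τ hτ) (hapos i h2 hik)
      (fun t ht => hble2 i (by omega) (by omega) t ht)
      (fun t ht => hble2 (i + 1) (by omega) (by omega) t ht) hd
  have hstepR : ∀ i, 2 ≤ i → i ≤ k → decays b τ₀ m δ (i + 1) → decays b τ₀ m δ i := by
    intro i h2 hik hd
    refine decay_step b i (i + 1) (i - 1) τ₀ δ m (sig k (i - 1)) I hIccI ?_ (hapos i h2 hik)
      (fun t ht => hble2 i (by omega) (by omega) t ht)
      (fun t ht => hble2 (i - 1) (by omega) (by omega) t ht) hd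
    intro τ hτ
    have h := hbderiv i h2 hik τ hτ
    convert h using 1
    ring
  have hbase : ∀ j, 1 ≤ j → j ≤ k + 1 → b j τ₀ < m → decays b τ₀ m δ j :=
    fun j h1 h2 hlt => decay_base b j τ₀ δ m hδ (hcontAt j h1 h2 τ₀ hτ₀) hlt
  have hchainR : ∀ d : ℕ, ∀ j, 1 ≤ j → j + d ≤ k → b j τ₀ < m →
      decays b τ₀ m δ (j + d) := by
    intro d
    induction d with
    | zero => intro j h1 h2 hlt; exact hbase j h1 (by omega) hlt
    | succ d ih =>
      intro j h1 h2 hlt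
      have hP := ih j h1 (by omega) hlt
      exact hstepL (j + d + 1) (by omega) (by omega) hP
  have hchainL : ∀ d : ℕ, ∀ i, 2 ≤ i → i + d ≤ k + 1 → b (i + d) τ₀ < m →
      decays b τ₀ m δ i := by
    intro d
    induction d with
    | zero => intro i h2 hik hlt; exact hbase i (by omega) (by omega) hlt
    | succ d ih =>
      intro i h2 hik hlt
      have hP : decays b τ₀ m δ (i + 1) := by
        refine ih (i + 1) (by omega) (by omega) ?_
        have e : i + 1 + d = i + (d + 1) := by omega
        rw [e]
        exact hlt
      exact hstepR i h2 (by omega) hP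
  have hdecall : ∀ i, 2 ≤ i → i ≤ k → decays b τ₀ m δ i := by
    intro i h2 hik
    rcases lt_or_ge (b i τ₀) m with hlt | hge
    · exact hbase i (by omega) (by omega) hlt
    by_cases hmpos : 0 < m
    · have h1 : b 1 τ₀ < m := by rw [hb1]; exact hmpos
      have h := hchainR (i - 1) 1 le_rfl (by omega) h1
      have e : 1 + (i - 1) = i := by omega
      rwa [e] at h
    · have hm0' : m = 0 := le_antisymm (not_lt.mp hmpos) hm0
      have hex : ∃ j, 2 ≤ j ∧ j ≤ k ∧ b j τ₀ < m := by
        by_contra hcon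
        push_neg at hcon
        have hall : ∀ j, 2 ≤ j → j ≤ k → b j τ₀ = 0 := by
          intro j hj2 hjk
          have hge' := hcon j hj2 hjk
          have hle' := hble2 j (by omega) (by omega) τ₀ ⟨le_rfl, by linarith⟩
          have heq := le_antisymm hle' hge'
          rw [heq, hm0']
        have hxieq : ∀ j, 2 ≤ j → j ≤ k → ξ j τ₀ = ξ (j - 1) τ₀ := by
          intro j hj2 hjk
          have h0 := hall j hj2 hjk
          rw [hbformula j hj2 hjk] at h0
          have hs := hsigpos (j - 1) (by omega) (by omega)
          have he0 : Real.exp (-(ξ j τ₀ - ξ (j - 1) τ₀)) - 1 = 0 := by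
            rcases mul_eq_zero.mp h0 with h | h
            · exact absurd h (ne_of_gt hs)
            · exact h
          have he1 : Real.exp (-(ξ j τ₀ - ξ (j - 1) τ₀)) = 1 := by linarith
          have := Real.exp_eq_exp.mp (he1.trans Real.exp_zero.symm)
          linarith
        have hconst : ∀ j, 1 ≤ j → j ≤ k → ξ j τ₀ = ξ 1 τ₀ := by
          intro j
          induction j with
          | zero => omega
          | succ n ih =>
            intro h1 h2
            rcases Nat.lt_or_ge 1 (n + 1) with h | h
            · have e := hxieq (n + 1) (by omega) h2
              have e2 : n + 1 - 1 = n := rfl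
              rw [e2] at e
              rw [e]
              exact ih (by omega) (by omega)
            · have : n + 1 = 1 := by omega
              rw [this]
        have hsum0 := hsum τ₀ hτ₀
        rw [Finset.sum_congr rfl (fun j hj =>
          hconst j (Finset.mem_Icc.mp hj).1 (Finset.mem_Icc.mp hj).2)] at hsum0
        rw [Finset.sum_const, Nat.card_Icc, Nat.add_sub_cancel, nsmul_eq_mul] at hsum0
        have hk0 : (k : ℝ) ≠ 0 := by positivity
        have hξ1 : ξ 1 τ₀ = 0 := by
          rcases mul_eq_zero.mp hsum0 with h | h
          · exact absurd h hk0
          · exact h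
        obtain ⟨i0, hi01, hi0k, hi0ne⟩ := hne τ₀ hτ₀
        exact hi0ne (by rw [hconst i0 hi01 hi0k, hξ1])
      obtain ⟨j, hj2, hjk, hjlt⟩ := hex
      rcases Nat.lt_or_ge j i with hji | hij
      · have h := hchainR (i - j) j (by omega) (by omega) hjlt
        have e : j + (i - j) = i := by omega
        rwa [e] at h
      · have hij' : i < j := by
          rcases Nat.eq_or_lt_of_le hij with h | h
          · exfalso; rw [h] at hge; exact absurd hjlt (not_lt.mpr hge)
          · exact h
        refine hchainL (j - i) i h2 (by omega) ?_
        have e : i + (j - i) = j := by omega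
        rw [e]
        exact hjlt
  have key : ∀ i ∈ Finset.Icc 2 k, ∃ ε, 0 < ε ∧ ε ≤ δ / 2 ∧
      ∀ t ∈ Set.Ioo τ₀ (τ₀ + ε), b i t < m := by
    intro i hi
    obtain ⟨h2, hik⟩ := Finset.mem_Icc.mp hi
    obtain ⟨ε, hε0, hεδ, c, hc0, N, hdec⟩ := hdecall i h2 hik
    refine ⟨ε, hε0, hεδ, fun t ht => ?_⟩
    have hd := hdec t ⟨ht.1.le, ht.2.le⟩
    have hpow : 0 < c * (t - τ₀) ^ (N + 1) := by
      have hts : 0 < t - τ₀ := sub_pos.mpr ht.1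
      positivity
    linarith
  choose! e he0 heδ hee using key
  have hne2k : (Finset.Icc 2 k).Nonempty := Finset.nonempty_Icc.mpr hk
  set ε := (Finset.Icc 2 k).inf' hne2k e with hεdef
  have hε0 : 0 < ε := (Finset.lt_inf'_iff hne2k).mpr fun i hi => he0 i hi
  have h2mem : (2 : ℕ) ∈ Finset.Icc 2 k := Finset.mem_Icc.mpr ⟨le_rfl, hk⟩
  have hεδ2 : ε ≤ δ / 2 := le_trans (Finset.inf'_le e h2mem) (heδ 2 h2mem)
  refine ⟨ε, hε0, ?_, ?_⟩
  · intro t ht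
    exact hδI ⟨ht.1, by have := ht.2; linarith⟩
  · intro i h2 hik _ t ht
    have hmem : i ∈ Finset.Icc 2 k := Finset.mem_Icc.mpr ⟨h2, hik⟩
    have hεe : ε ≤ e i := Finset.inf'_le e hmem
    exact hee i hmem t ⟨ht.1, lt_of_lt_of_le ht.2 (by linarith)⟩
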